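/- arXiv:2203.03404 — 6 statements merged into one kernel-verified Lean document; each statement's English description precedes it below -/
import Mathlib

section
/- There exists a constant c ∈ ℕ such that for every deterministic weak Muller automaton 𝔄 with k states over an alphabet of the form Σ_I × Σ_O, the following are equivalent: (i) Player O wins the delay game Γ_f(L(𝔄)) for some constant delay function f with f(0) ≤ 2^(2^(c·k)); (ii) Player O wins Γ_g(L(𝔄)) for some delay function g. (That is, doubly-exponential constant lookahead in the number of states is sufficient whenever any lookahead suffices.) -/
universe u

namespace DelayGames

/-- A delay function maps each round to a positive number of letters. -/
def IsDelay (f : ℕ → ℕ) : Prop := ∀ i, 1 ≤ f i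

/-- A delay function is constant if it is `1` from round `1` on. -/
def IsConstantDelay (f : ℕ → ℕ) : Prop := ∀ i, 0 < i → f i = 1

/-- `α` is the flattening (concatenation) of the sequence of finite blocks `u`:
every finite concatenation of the first `i` blocks is the corresponding prefix of `α`. -/
def Flattens {σ : Type*} (u : ℕ → List σ) (α : ℕ → σ) : Prop :=
  ∀ i, (List.range i).flatMap u =
    (List.range ((List.range i).flatMap u).length).map α

/-- Player O wins the delay game with delay function `f` and winning condition `L`:
she has a strategy (mapping the input letters produced so far to an output letter)
such that every consistent play has its outcome in `L`. -/
def OWins {σI σO : Type*} (f : ℕ → ℕ) (L : Set (ℕ → σI × σO)) : Prop :=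
  ∃ τO : List σI → σO,
    ∀ (u : ℕ → List σI) (v : ℕ → σO),
      (∀ i, (u i).length = f i) →
      (∀ i, v i = τO ((List.range (i + 1)).flatMap u)) →
      ∀ α : ℕ → σI, Flattens u α → (fun n => (α n, v n)) ∈ L

/-- Player I wins the delay game with delay function `f` and winning condition `L`:
he has a strategy (mapping the output letters produced so far to a block of input
letters of the prescribed length) such that no consistent play has its outcome in `L`. -/
def IWins {σI σO : Type*} (f : ℕ → ℕ) (L : Set (ℕ → σI × σO)) : Prop :=
  ∃ τI : List σO → List σI,
    (∀ w, (τI w).length = f w.length) ∧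
    ∀ (u : ℕ → List σI) (v : ℕ → σO),
      (∀ i, u i = τI ((List.range i).map v)) →
      ∀ α : ℕ → σI, Flattens u α → (fun n => (α n, v n)) ∉ L

/-- A deterministic weak Muller automaton (state type `Q`, alphabet `σ`). -/
structure WDMA (Q σ : Type*) where
  init : Q
  step : Q → σ → Q
  acc : Set (Set Q)

/-- The unique run of a deterministic automaton on an infinite word. -/
def WDMA.run {Q σ : Type*} (A : WDMA Q σ) (α : ℕ → σ) : ℕ → Q
  | 0 => A.init
  | n + 1 => A.step (WDMA.run A α n) (α n)

/-- A wDMA accepts iff the occurrence set of the run is in the acceptance family. -/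
def WDMA.language {Q σ : Type*} (A : WDMA Q σ) : Set (ℕ → σ) :=
  {α | Set.range (A.run α) ∈ A.acc}

/-- A non-deterministic weak Muller automaton. -/
structure WNMA (Q σ : Type*) where
  init : Q
  trans : Set (Q × σ × Q)
  acc : Set (Set Q)

/-- A wNMA accepts iff some initial run processing the word has its occurrence set
in the acceptance family. -/
def WNMA.language {Q σ : Type*} (A : WNMA Q σ) : Set (ℕ → σ) :=
  {α | ∃ ρ : ℕ → Q, ρ 0 = A.init ∧
    (∀ n, (ρ n, α n, ρ (n + 1)) ∈ A.trans) ∧ Set.range ρ ∈ A.acc}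

/-- Boolean formulas over variables in `Q` (Emerson-Lei conditions). -/
inductive BForm (Q : Type u) : Type u where
  | var : Q → BForm Q
  | not : BForm Q → BForm Q
  | and : BForm Q → BForm Q → BForm Q
  | or : BForm Q → BForm Q → BForm Q

/-- Evaluation of a Boolean formula under a valuation. -/
def BForm.eval {Q : Type*} (v : Q → Prop) : BForm Q → Prop
  | .var q => v q
  | .not φ => ¬ BForm.eval v φ
  | .and φ ψ => BForm.eval v φ ∧ BForm.eval v ψ
  | .or φ ψ => BForm.eval v φ ∨ BForm.eval v ψ

/-- The length of a Boolean formula. -/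
def BForm.size {Q : Type*} : BForm Q → ℕ
  | .var _ => 1
  | .not φ => BForm.size φ + 1
  | .and φ ψ => BForm.size φ + BForm.size ψ + 1
  | .or φ ψ => BForm.size φ + BForm.size ψ + 1

/-- The family `𝓕_φ` of sets of states whose characteristic valuation satisfies `φ`. -/
def BForm.models {Q : Type*} (φ : BForm Q) : Set (Set Q) :=
  {F | BForm.eval (fun q => q ∈ F) φ}

/-- The set of states visited infinitely often by a run. -/
def InfOcc {Q : Type*} (ρ : ℕ → Q) : Set Q := {q | ∀ N, ∃ n, N ≤ n ∧ ρ n = q}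

/-- A deterministic parity automaton. -/
structure DPA (Q σ : Type*) where
  init : Q
  step : Q → σ → Q
  color : Q → ℕ

def DPA.run {Q σ : Type*} (A : DPA Q σ) (α : ℕ → σ) : ℕ → Q
  | 0 => A.init
  | n + 1 => A.step (DPA.run A α n) (α n)

/-- A DPA accepts iff the maximal color visited infinitely often by the run is even. -/
def DPA.language {Q σ : Type*} (A : DPA Q σ) : Set (ℕ → σ) :=
  {α | ∃ q ∈ InfOcc (A.run α), Even (A.color q) ∧
    ∀ q' ∈ InfOcc (A.run α), A.color q' ≤ A.color q}

/-- A non-deterministic parity automaton. -/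
structure NPA (Q σ : Type*) where
  init : Q
  trans : Set (Q × σ × Q)
  color : Q → ℕ

/-- An NPA accepts iff some initial run processing the word is such that the maximal
color it visits infinitely often is even. -/
def NPA.language {Q σ : Type*} (A : NPA Q σ) : Set (ℕ → σ) :=
  {α | ∃ ρ : ℕ → Q, ρ 0 = A.init ∧
    (∀ n, (ρ n, α n, ρ (n + 1)) ∈ A.trans) ∧
    ∃ q ∈ InfOcc ρ, Even (A.color q) ∧ ∀ q' ∈ InfOcc ρ, A.color q' ≤ A.color q}

/-- A finite word contains a bad `j`-pair. -/
def ListBadPair (w : List ℕ) (j : ℕ) : Prop :=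
  ∃ p p', p < p' ∧ p' < w.length ∧ w.getD p 0 = j ∧ w.getD p' 0 = j ∧
    ∀ q, p < q → q < p' → w.getD q 0 < j

/-- An infinite word contains a bad `j`-pair. -/
def InfBadPair (α : ℕ → ℕ) (j : ℕ) : Prop :=
  ∃ p p', p < p' ∧ α p = j ∧ α p' = j ∧ ∀ q, p < q → q < p' → α q < j

/-- The winning condition `P_n`: `(α, β)` belongs to it iff `α(1)α(2)⋯` contains a
bad `β(0)`-pair. -/
def P (n : ℕ) : Set (ℕ → Fin n × Fin n) :=
  {w | InfBadPair (fun k => ((w (k + 1)).1 : ℕ)) ((w 0).2 : ℕ)}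

/-- The `k`-th bit of the binary representation of `x`. -/
def bit (x k : ℕ) : ℕ := x / 2 ^ k % 2

section UpperBoundAux

open Classical List

noncomputable section

variable {σI σO Q : Type}

variable (A : WDMA Q (σI × σO))

def pstep : (Q × Set Q) → (σI × σO) → (Q × Set Q) :=
  fun p a => (A.step p.1 a, insert (A.step p.1 a) p.2)

def pairRun (p : Q × Set Q) (l : List (σI × σO)) : Q × Set Q := l.foldl (pstep A) p

def pInit : Q × Set Q := (A.init, {A.init})

lemma pairRun_append (p : Q × Set Q) (l₁ l₂ : List (σI × σO)) :
    pairRun A p (l₁ ++ l₂) = pairRun A (pairRun A p l₁) l₂ :=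
  List.foldl_append

lemma pairRun_range (γ : ℕ → σI × σO) (n : ℕ) :
    pairRun A (pInit A) ((List.range n).map γ) =
      (A.run γ n, {q | ∃ m, m ≤ n ∧ A.run γ m = q}) := by
  induction n with
  | zero =>
      show pInit A = _
      unfold pInit
      refine Prod.ext rfl ?_
      show ({A.init} : Set Q) = _
      ext q
      simp only [Set.mem_singleton_iff, Set.mem_setOf_eq]
      constructor
      · rintro rfl; exact ⟨0, le_refl 0, rfl⟩
      · rintro ⟨m, hm, rfl⟩
        have : m = 0 := Nat.le_zero.mp hm
        subst this; rfl
  | succ n ih =>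
      rw [List.range_succ, List.map_append, pairRun_append, ih]
      show pstep A _ _ = _
      unfold pstep
      refine Prod.ext ?_ ?_
      · rfl
      · show insert (A.step (A.run γ n) (γ n)) {q | ∃ m, m ≤ n ∧ A.run γ m = q} = _
        have hrun : A.step (A.run γ n) (γ n) = A.run γ (n + 1) := rfl
        rw [hrun]
        ext q
        simp only [Set.mem_insert_iff, Set.mem_setOf_eq]
        constructor
        · rintro (rfl | ⟨m, hm, rfl⟩)
          · exact ⟨n + 1, le_rfl, rfl⟩
          · exact ⟨m, by omega, rfl⟩
        · rintro ⟨m, hm, rfl⟩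
          rcases Nat.lt_or_ge m (n + 1) with h | h
          · exact Or.inr ⟨m, by omega, rfl⟩
          · have : m = n + 1 := by omega
            subst this; exact Or.inl rfl

lemma union_visited (γ : ℕ → σI × σO) (t : ℕ → ℕ) (ht : ∀ n, ∃ j, n ≤ t j) :
    (⋃ j, {q | ∃ m, m ≤ t j ∧ A.run γ m = q}) = Set.range (A.run γ) := by
  ext q
  simp only [Set.mem_iUnion, Set.mem_setOf_eq, Set.mem_range]
  constructor
  · rintro ⟨j, m, _, h⟩; exact ⟨m, h⟩
  · rintro ⟨m, h⟩
    obtain ⟨j, hj⟩ := ht m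
    exact ⟨j, m, hj, h⟩

def beh (w : List σI) : (Q × Set Q) → Set (Q × Set Q) :=
  fun p => {p' | ∃ y : List σO, y.length = w.length ∧ pairRun A p (w.zip y) = p'}

lemma beh_append (w w' : List σI) (p : Q × Set Q) :
    beh A (w ++ w') p = ⋃ p' ∈ beh A w p, beh A w' p' := by
  ext p''
  simp only [beh, Set.mem_setOf_eq, Set.mem_iUnion]
  constructor
  · rintro ⟨y, hy, hr⟩
    rw [List.length_append] at hy
    refine ⟨pairRun A p (w.zip (y.take w.length)), ⟨y.take w.length, ?_, rfl⟩,
      y.drop w.length, ?_, ?_⟩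
    · rw [List.length_take]; omega
    · rw [List.length_drop]; omega
    · have hsplit : y = y.take w.length ++ y.drop w.length := (List.take_append_drop _ _).symm
      rw [hsplit, List.zip_append (by rw [List.length_take]; omega), pairRun_append] at hr
      exact hr
  · rintro ⟨p', ⟨y₁, hy₁, rfl⟩, y₂, hy₂, hr⟩
    refine ⟨y₁ ++ y₂, ?_, ?_⟩
    · rw [List.length_append, List.length_append]; omega
    · rw [List.zip_append hy₁.symm, pairRun_append]
      exact hr

def Binf : Set ((Q × Set Q) → Set (Q × Set Q)) :=
  {b | ∀ m, ∃ w : List σI, m ≤ w.length ∧ beh A w = b}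

def pick (b : (Q × Set Q) → Set (Q × Set Q)) (m : ℕ) : List σI :=
  if h : b ∈ Binf A then (h m).choose else []

lemma pick_length {b} (h : b ∈ Binf A) (m : ℕ) : m ≤ (pick A b m).length := by
  unfold pick; rw [dif_pos h]; exact (h m).choose_spec.1

lemma pick_beh {b} (h : b ∈ Binf A) (m : ℕ) : beh A (pick A b m) = b := by
  unfold pick; rw [dif_pos h]; exact (h m).choose_spec.2

lemma beh_append_congr {u u' : List σI} (v : List σI) (h : beh A u = beh A u') :
    beh A (u ++ v) = beh A (u' ++ v) := by
  funext p
  rw [beh_append, beh_append, h]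

lemma beh_mem_Binf [Finite Q] (w : List σI)
    (hw : Nat.card ((Q × Set Q) → Set (Q × Set Q)) < w.length) :
    beh A w ∈ Binf A := by
  classical
  haveI : Fintype ((Q × Set Q) → Set (Q × Set Q)) := Fintype.ofFinite _
  have hcard : Fintype.card ((Q × Set Q) → Set (Q × Set Q)) < Fintype.card (Fin (w.length + 1)) := by
    rw [Fintype.card_fin, ← Nat.card_eq_fintype_card]; omega
  obtain ⟨a, b, hab, heqab⟩ := Fintype.exists_ne_map_eq_of_card_lt
      (fun i : Fin (w.length + 1) => beh A (w.take (i : ℕ))) hcard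
  -- extract i < j with equal prefix behaviours
  obtain ⟨i, j, hij, hjle, heq⟩ :
      ∃ i j : ℕ, i < j ∧ j ≤ w.length ∧ beh A (w.take i) = beh A (w.take j) := by
    rcases lt_or_gt_of_ne hab with h | h
    · exact ⟨a, b, h, by omega, heqab⟩
    · exact ⟨b, a, h, by omega, heqab.symm⟩
  set mid := (w.drop i).take (j - i) with hmid
  have hmidlen : mid.length = j - i := by
    rw [hmid, List.length_take, List.length_drop]
    omega
  have htake : w.take j = w.take i ++ mid := by
    have h1 : i + (j - i) = j := by omega
    rw [← h1, List.take_add]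
  have hpow : ∀ r : ℕ, beh A (w.take i ++ (List.replicate r mid).flatten) = beh A (w.take i) := by
    intro r; induction r with
    | zero => simp
    | succ r ih =>
        have h2 : (List.replicate (r + 1) mid).flatten = (List.replicate r mid).flatten ++ mid := by
          rw [List.replicate_succ', List.flatten_append]
          simp
        rw [h2, ← List.append_assoc]
        calc beh A ((w.take i ++ (List.replicate r mid).flatten) ++ mid)
            = beh A (w.take i ++ mid) := beh_append_congr A mid ih
          _ = beh A (w.take j) := by rw [htake]
          _ = beh A (w.take i) := heq.symm
  intro m
  refine ⟨(w.take i ++ (List.replicate m mid).flatten) ++ w.drop j, ?_, ?_⟩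
  · rw [List.length_append, List.length_append, List.length_flatten]
    have : (List.map List.length (List.replicate m mid)).sum = m * mid.length := by
      rw [List.map_replicate, List.sum_replicate, smul_eq_mul]
    rw [this, hmidlen]
    have : 1 ≤ j - i := by omega
    have hmm : m ≤ m * (j - i) := Nat.le_mul_of_pos_right m (by omega)
    omega
  · have h3 : beh A (w.take i ++ (List.replicate m mid).flatten) = beh A (w.take j) := by
      rw [hpow m, heq]
    calc beh A ((w.take i ++ (List.replicate m mid).flatten) ++ w.drop j)
        = beh A (w.take j ++ w.drop j) := beh_append_congr A _ h3
      _ = beh A w := by rw [List.take_append_drop]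


def FSum (g : ℕ → ℕ) (n : ℕ) : ℕ := ((List.range (n + 1)).map g).sum

lemma FSum_zero (g : ℕ → ℕ) : FSum g 0 = g 0 := by
  unfold FSum
  rw [List.range_succ]
  simp

lemma FSum_succ (g : ℕ → ℕ) (n : ℕ) : FSum g (n + 1) = FSum g n + g (n + 1) := by
  unfold FSum
  rw [List.range_succ, List.map_append, List.sum_append]
  simp

lemma FSum_mono (g : ℕ → ℕ) : Monotone (FSum g) := by
  apply monotone_nat_of_le_succ
  intro n
  rw [FSum_succ]
  omega

lemma FSum_ge (g : ℕ → ℕ) (hg : IsDelay g) (n : ℕ) : n + 1 ≤ FSum g n := by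
  induction n with
  | zero => rw [FSum_zero]; exact hg 0
  | succ n ih => rw [FSum_succ]; have := hg (n + 1); omega

/-- blocks of `α` cut according to the delay function `g` -/
def cutBlocks (g : ℕ → ℕ) (α : ℕ → σI) : ℕ → List σI
  | 0 => (List.range (FSum g 0)).map α
  | (i + 1) => (List.range (g (i + 1))).map (fun r => α (FSum g i + r))

lemma cutBlocks_length (g : ℕ → ℕ) (α : ℕ → σI) (i : ℕ) :
    (cutBlocks g α i).length = g i := by
  cases i with
  | zero => simp [cutBlocks, FSum_zero]
  | succ i => simp [cutBlocks]

lemma cutBlocks_flat (g : ℕ → ℕ) (α : ℕ → σI) (i : ℕ) :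
    (List.range (i + 1)).flatMap (cutBlocks g α) = (List.range (FSum g i)).map α := by
  induction i with
  | zero =>
      show (List.range 1).flatMap _ = _
      rw [List.range_succ]
      simp [cutBlocks]
  | succ i ih =>
      rw [List.range_succ, List.flatMap_append, ih]
      rw [FSum_succ, List.range_add, List.map_append, List.map_map]
      simp [cutBlocks]

lemma flatMap_length_eq (g : ℕ → ℕ) (u : ℕ → List σI) (hu : ∀ i, (u i).length = g i) (i : ℕ) :
    ((List.range (i + 1)).flatMap u).length = FSum g i := by
  rw [List.length_flatMap]
  unfold FSum
  congr 1
  apply List.map_congr_left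
  intro a _
  exact hu a

lemma OWins_iff_stream (g : ℕ → ℕ) :
    OWins g A.language ↔
      ∃ τ : List σI → σO, ∀ α : ℕ → σI,
        Set.range (A.run (fun n => (α n, τ ((List.range (FSum g n)).map α)))) ∈ A.acc := by
  constructor
  · rintro ⟨τO, h⟩
    refine ⟨τO, fun α => ?_⟩
    set u := cutBlocks g α with hu
    have hlen : ∀ i, (u i).length = g i := cutBlocks_length g α
    set v : ℕ → σO := fun i => τO ((List.range (i + 1)).flatMap u) with hv
    have hFl : Flattens u α := by
      intro i
      cases i with
      | zero => simp [Flattens]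
      | succ i =>
          rw [cutBlocks_flat g α i]
          congr 1
          rw [List.length_map, List.length_range]
    have hmem := h u v hlen (fun i => rfl) α hFl
    have hveq : (fun n => (α n, v n)) =
        (fun n => (α n, τO ((List.range (FSum g n)).map α))) := by
      funext n
      rw [hv]
      simp only
      rw [cutBlocks_flat g α n]
    rw [hveq] at hmem
    exact hmem
  · rintro ⟨τ, h⟩
    refine ⟨τ, ?_⟩
    intro u v hlen hv α hfl
    have hveq : ∀ i, v i = τ ((List.range (FSum g i)).map α) := by
      intro i
      rw [hv i]
      congr 1
      have h1 := hfl (i + 1)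
      have h2 : ((List.range (i + 1)).flatMap u).length = FSum g i :=
        flatMap_length_eq g u hlen i
      rw [h1, h2]
    have hfun : (fun n => (α n, v n)) =
        (fun n => (α n, τ ((List.range (FSum g n)).map α))) := by
      funext n; rw [hveq n]
    show (fun n => (α n, v n)) ∈ A.language
    rw [hfun]
    exact h α


def blocksF (F : ℕ → ℕ) : List ((Q × Set Q) → Set (Q × Set Q)) → List (List σI) := fun l =>
  l.foldl (fun acc b => acc ++ [pick A b (F acc.flatten.length)]) []

lemma blocksF_concat (F : ℕ → ℕ) (l : List ((Q × Set Q) → Set (Q × Set Q))) (b) :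
    blocksF A F (l ++ [b]) = blocksF A F l ++ [pick A b (F (blocksF A F l).flatten.length)] := by
  unfold blocksF
  rw [List.foldl_append]
  rfl

def pairAt (τ : List σI → σO) (F : ℕ → ℕ) (W : List σI) (n : ℕ) : Q × Set Q :=
  pairRun A (pInit A) ((W.take n).zip ((List.range n).map (fun t => τ (W.take (F t)))))

def sigO (τ : List σI → σO) (F : ℕ → ℕ) : List ((Q × Set Q) → Set (Q × Set Q)) → Q × Set Q :=
  fun l => pairAt A τ F (blocksF A F l).flatten (blocksF A F l.dropLast).flatten.length

def Aseq (τ : List σI → σO) (F : ℕ → ℕ) (β : ℕ → (Q × Set Q) → Set (Q × Set Q)) : ℕ → Q × Set Q :=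
  fun j => match j with
  | 0 => pInit A
  | (j + 1) => sigO A τ F ((List.range (j + 2)).map β)

def WWd (F : ℕ → ℕ) (β : ℕ → (Q × Set Q) → Set (Q × Set Q)) (j : ℕ) : List σI :=
  (blocksF A F ((List.range j).map β)).flatten

lemma WWd_zero (F : ℕ → ℕ) (β : ℕ → (Q × Set Q) → Set (Q × Set Q)) : WWd A F β 0 = [] := rfl

lemma WWd_succ (F : ℕ → ℕ) (β : ℕ → (Q × Set Q) → Set (Q × Set Q)) (j : ℕ) :
    WWd A F β (j + 1) = WWd A F β j ++ pick A (β j) (F (WWd A F β j).length) := by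
  unfold WWd
  rw [List.range_succ, List.map_append, List.map_singleton, blocksF_concat,
    List.flatten_append]
  simp

lemma prefix_getD {l l' : List σI} (h : l <+: l') {t : ℕ} (ht : t < l.length) (d : σI) :
    l.getD t d = l'.getD t d := by
  rw [List.getD_eq_getElem l d ht, List.getD_eq_getElem l' d (lt_of_lt_of_le ht h.length_le)]
  exact h.getElem ht

lemma sigO_winning (τ : List σI → σO) (F : ℕ → ℕ)
    (hF : ∀ n, n + 1 ≤ F n) (hFm : Monotone F)
    (hτ : ∀ α : ℕ → σI,
      Set.range (A.run (fun n => (α n, τ ((List.range (F n)).map α)))) ∈ A.acc)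
    (β : ℕ → (Q × Set Q) → Set (Q × Set Q)) (hβ : ∀ i, β i ∈ Binf A) :
    (∀ j, Aseq A τ F β (j + 1) ∈ (β j) (Aseq A τ F β j)) ∧
      (⋃ j, (Aseq A τ F β j).2) ∈ A.acc := by
  classical
  set WW : ℕ → List σI := WWd A F β with hWWdef
  have hWs : ∀ j, WW (j + 1) = WW j ++ pick A (β j) (F (WW j).length) := WWd_succ A F β
  have hlen1 : ∀ j, (WW (j + 1)).length =
      (WW j).length + (pick A (β j) (F (WW j).length)).length := by
    intro j; rw [hWs j, List.length_append]
  have hFstep : ∀ j, F (WW j).length ≤ (WW (j + 1)).length := by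
    intro j
    have := pick_length A (hβ j) (F (WW j).length)
    rw [hlen1 j]; omega
  have hmono : ∀ j, (WW j).length ≤ (WW (j + 1)).length := by
    intro j; rw [hlen1 j]; omega
  have hge : ∀ j, j ≤ (WW j).length := by
    intro j
    induction j with
    | zero => omega
    | succ j ih =>
        have h1 := hFstep j
        have h2 := hF (WW j).length
        omega
  have hpref : ∀ {j j'}, j ≤ j' → WW j <+: WW j' := by
    intro j j' h
    induction j', h using Nat.le_induction with
    | base => exact List.prefix_refl _
    | succ n hn ih => exact ih.trans (hWs n ▸ List.prefix_append _ _)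
  have hlen01 : 1 ≤ (pick A (β 0) 1).length := pick_length A (hβ 0) 1
  set aI : σI := (pick A (β 0) 1).getLast (by
    intro h; rw [h] at hlen01; simp at hlen01) with haIdef
  set alpha : ℕ → σI := fun t => (WW (t + 1)).getD t aI with halphadef
  have hWd : ∀ j t, t < (WW j).length → (WW j).getD t aI = alpha t := by
    intro j t ht
    have h3 : t < (WW (t + 1)).length := lt_of_lt_of_le (Nat.lt_succ_self t) (hge (t + 1))
    show _ = (WW (t + 1)).getD t aI
    rcases le_total j (t + 1) with hj | hj
    · exact prefix_getD (hpref hj) ht aI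
    · exact (prefix_getD (hpref hj) h3 aI).symm
  have htake : ∀ j m, m ≤ (WW j).length → (WW j).take m = (List.range m).map alpha := by
    intro j m hm
    apply List.ext_getElem
    · rw [List.length_take, List.length_map, List.length_range]
      omega
    · intro t h1 h2
      rw [List.getElem_take, List.getElem_map, List.getElem_range]
      have ht : t < (WW j).length := by
        rw [List.length_take] at h1
        omega
      rw [← List.getD_eq_getElem (WW j) aI ht]
      exact hWd j t ht
  set gam : ℕ → σI × σO := fun n => (alpha n, τ ((List.range (F n)).map alpha)) with hgamdef
  have hid : ∀ j, Aseq A τ F β j = pairRun A (pInit A) ((List.range (WW j).length).map gam) := by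
    intro j
    cases j with
    | zero =>
        show pInit A = _
        rw [show (WW 0).length = 0 from rfl]
        rfl
    | succ j =>
        show sigO A τ F ((List.range (j + 2)).map β) = _
        unfold sigO
        have hdrop : ((List.range (j + 2)).map β).dropLast = (List.range (j + 1)).map β := by
          rw [show j + 2 = (j + 1) + 1 from rfl, List.range_succ, List.map_append,
            List.map_singleton, List.dropLast_concat]
        rw [hdrop]
        show pairAt A τ F (WW (j + 2)) (WW (j + 1)).length = _
        unfold pairAt
        congr 1
        apply List.ext_getElem
        · rw [List.length_zip, List.length_take, List.length_map, List.length_range,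
            List.length_map, List.length_range]
          have hmono2 : (WW (j + 1)).length ≤ (WW (j + 2)).length := by
            simpa using hmono (j + 1)
          omega
        · intro t h1 h2
          have htlt : t < (WW (j + 1)).length := by
            rw [List.length_zip, List.length_take, List.length_map, List.length_range] at h1
            omega
          have hmono2 : (WW (j + 1)).length ≤ (WW (j + 2)).length := by
            simpa using hmono (j + 1)
          have hFstep2 : F (WW (j + 1)).length ≤ (WW (j + 2)).length := by
            simpa using hFstep (j + 1)
          have htlt2 : t < (WW (j + 2)).length := lt_of_lt_of_le htlt hmono2
          have hFt : F t ≤ (WW (j + 2)).length :=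
            le_trans (hFm (le_of_lt htlt)) hFstep2
          rw [List.getElem_zip, List.getElem_take, List.getElem_map, List.getElem_range,
            List.getElem_map, List.getElem_range]
          refine Prod.ext ?_ ?_
          · show (WW (j + 2))[t]'htlt2 = (gam t).1
            rw [← List.getD_eq_getElem (WW (j + 2)) aI htlt2]
            exact hWd (j + 2) t htlt2
          · show τ ((WW (j + 2)).take (F t)) = (gam t).2
            rw [htake (j + 2) (F t) hFt]
  have hleg : ∀ j, Aseq A τ F β (j + 1) ∈ (β j) (Aseq A τ F β j) := by
    intro j
    set xj : List σI := pick A (β j) (F (WW j).length) with hxj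
    set yj : List σO := (List.range xj.length).map (fun r => (gam ((WW j).length + r)).2) with hyj
    have hyjlen : yj.length = xj.length := by
      rw [hyj, List.length_map, List.length_range]
    have hmid : (List.range xj.length).map (fun r => gam ((WW j).length + r)) = xj.zip yj := by
      apply List.ext_getElem
      · rw [List.length_map, List.length_range, List.length_zip, hyjlen]
        omega
      · intro r h1 h2
        have hr : r < xj.length := by
          rw [List.length_map, List.length_range] at h1
          exact h1
        have hlr : (WW j).length + r < (WW (j + 1)).length := by
          rw [hlen1 j, ← hxj]; omega
        rw [List.getElem_map, List.getElem_range, List.getElem_zip]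
        refine Prod.ext ?_ ?_
        · show (gam ((WW j).length + r)).1 = xj[r]'hr
          have e0 : alpha ((WW j).length + r) = xj.getD r aI := by
            rw [← hWd (j + 1) _ hlr]
            rw [hWs j]
            rw [List.getD_append_right _ _ _ _ (Nat.le_add_right _ _)]
            congr 1
            omega
          show alpha ((WW j).length + r) = xj[r]'hr
          rw [e0, List.getD_eq_getElem xj aI hr]
        · have hry : r < yj.length := by rw [hyjlen]; exact hr
          show (gam ((WW j).length + r)).2 = yj[r]'hry
          rw [← List.getD_eq_getElem yj (gam 0).2 hry, hyj]
          have hry2 : r < (List.map (fun r => (gam ((WW j).length + r)).2)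
              (List.range xj.length)).length := by
            rw [List.length_map, List.length_range]; exact hr
          rw [List.getD_eq_getElem _ _ hry2, List.getElem_map, List.getElem_range]
    have hsplit : (List.range (WW (j + 1)).length).map gam =
        (List.range (WW j).length).map gam ++
          (List.range xj.length).map (fun r => gam ((WW j).length + r)) := by
      rw [hlen1 j, List.range_add, List.map_append, List.map_map]
      rfl
    rw [hid (j + 1), hsplit, pairRun_append, ← hid j, hmid]
    rw [← pick_beh A (hβ j) (F (WW j).length), ← hxj]
    exact ⟨yj, hyjlen, rfl⟩
  refine ⟨hleg, ?_⟩
  have hU : (⋃ j, (Aseq A τ F β j).2) = Set.range (A.run gam) := by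
    have h1 : ∀ j, (Aseq A τ F β j).2 = {q | ∃ m, m ≤ (WW j).length ∧ A.run gam m = q} := by
      intro j
      rw [hid j, pairRun_range]
    calc (⋃ j, (Aseq A τ F β j).2)
        = ⋃ j, {q | ∃ m, m ≤ (WW j).length ∧ A.run gam m = q} := Set.iUnion_congr h1
      _ = Set.range (A.run gam) := union_visited A gam _ (fun n => ⟨n, hge n⟩)
  rw [hU]
  exact hτ alpha


def blkOf (n0 : ℕ) (w : List σI) (s : ℕ) : List σI := (w.drop (s * n0)).take n0

def blkTrue (α : ℕ → σI) (n0 s : ℕ) : List σI :=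
  (List.range n0).map (fun r => α (s * n0 + r))

lemma blkTrue_length (α : ℕ → σI) (n0 s : ℕ) : (blkTrue α n0 s).length = n0 := by
  simp [blkTrue]

lemma blkOf_eq (α : ℕ → σI) (n0 m s : ℕ) (hm : s * n0 + n0 ≤ m) :
    blkOf n0 ((List.range m).map α) s = blkTrue α n0 s := by
  apply List.ext_getElem
  · simp [blkOf, blkTrue]
    omega
  · intro t h1 h2
    have ht : t < n0 := by
      rw [blkTrue_length] at h2
      exact h2
    simp only [blkOf, blkTrue]
    rw [List.getElem_take, List.getElem_drop, List.getElem_map, List.getElem_range,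
      List.getElem_map, List.getElem_range]

def AOf (σg : List ((Q × Set Q) → Set (Q × Set Q)) → Q × Set Q) (n0 : ℕ) (w : List σI) :
    ℕ → Q × Set Q := fun j =>
  if j = 0 then pInit A
  else σg ((List.range (j + 1)).map fun s => beh A (blkOf n0 w s))

def tauC (σg : List ((Q × Set Q) → Set (Q × Set Q)) → Q × Set Q) (n0 : ℕ) (o : σO) :
    List σI → σO := fun w =>
  let t := w.length - 2 * n0
  let i := t / n0
  if h : ∃ y : List σO, y.length = (blkOf n0 w i).length ∧
      pairRun A (AOf A σg n0 w i) ((blkOf n0 w i).zip y) = AOf A σg n0 w (i + 1)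
  then h.choose.getD (t % n0) o else o

lemma transferA (τ : List σI → σO) (F : ℕ → ℕ)
    (hF : ∀ n, n + 1 ≤ F n) (hFm : Monotone F)
    (hτ : ∀ α : ℕ → σI,
      Set.range (A.run (fun n => (α n, τ ((List.range (F n)).map α)))) ∈ A.acc)
    (n0 : ℕ) (hn0 : ∀ w : List σI, w.length = n0 → beh A w ∈ Binf A) (hn0pos : 1 ≤ n0)
    (o : σO) (α : ℕ → σI) :
    Set.range (A.run (fun n =>
      (α n, tauC A (sigO A τ F) n0 o ((List.range (2 * n0 + n)).map α)))) ∈ A.acc := by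
  classical
  set v : ℕ → σO := fun t => tauC A (sigO A τ F) n0 o ((List.range (2 * n0 + t)).map α)
    with hv
  set γ : ℕ → σI × σO := fun t => (α t, v t) with hγ
  set βs : ℕ → (Q × Set Q) → Set (Q × Set Q) := fun s => beh A (blkTrue α n0 s) with hβs
  have hβmem : ∀ s, βs s ∈ Binf A := fun s => hn0 (blkTrue α n0 s) (blkTrue_length α n0 s)
  obtain ⟨hleg, hacc⟩ := sigO_winning A τ F hF hFm hτ βs hβmem
  have hEx : ∀ j, ∃ y : List σO, y.length = (blkTrue α n0 j).length ∧
      pairRun A (Aseq A τ F βs j) ((blkTrue α n0 j).zip y) = Aseq A τ F βs (j + 1) :=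
    fun j => hleg j
  set Y : ℕ → List σO := fun j => (hEx j).choose with hY
  have yspec1 : ∀ j, (Y j).length = n0 := fun j =>
    ((hEx j).choose_spec.1).trans (blkTrue_length α n0 j)
  have yspec2 : ∀ j, pairRun A (Aseq A τ F βs j) ((blkTrue α n0 j).zip (Y j)) =
      Aseq A τ F βs (j + 1) := fun j => (hEx j).choose_spec.2
  -- c1 : the strategy values computed from prefixes agree with the abstract play
  have c1 : ∀ j m, j * n0 + n0 ≤ m →
      AOf A (sigO A τ F) n0 ((List.range m).map α) j = Aseq A τ F βs j := by
    intro j m hm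
    cases j with
    | zero => rfl
    | succ j =>
        have e1 : AOf A (sigO A τ F) n0 ((List.range m).map α) (j + 1)
            = sigO A τ F ((List.range (j + 2)).map
                fun s => beh A (blkOf n0 ((List.range m).map α) s)) := by
          simp [AOf]
        rw [e1]
        show _ = sigO A τ F ((List.range (j + 2)).map βs)
        congr 1
        apply List.ext_getElem
        · simp
        · intro s h1 h2
          rw [List.getElem_map, List.getElem_map, List.getElem_range]
          have hs : s < j + 2 := by
            rw [List.length_map, List.length_range] at h1
            exact h1
          have hsm : s * n0 + n0 ≤ m := by
            have h3 : s * n0 ≤ (j + 1) * n0 := Nat.mul_le_mul_right n0 (by omega)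
            omega
          rw [blkOf_eq α n0 m s hsm]
  -- c2 : the produced letters are the chosen realization letters
  have c2 : ∀ t, v t = (Y (t / n0)).getD (t % n0) o := by
    intro t
    have hdm : (t / n0) * n0 ≤ t := Nat.div_mul_le_self t n0
    have e1 : blkOf n0 ((List.range (2 * n0 + t)).map α) (t / n0) = blkTrue α n0 (t / n0) :=
      blkOf_eq α n0 _ _ (by omega)
    have e2 : AOf A (sigO A τ F) n0 ((List.range (2 * n0 + t)).map α) (t / n0)
        = Aseq A τ F βs (t / n0) := c1 _ _ (by omega)
    have e3 : AOf A (sigO A τ F) n0 ((List.range (2 * n0 + t)).map α) (t / n0 + 1)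
        = Aseq A τ F βs (t / n0 + 1) := c1 _ _ (by
          have : (t / n0 + 1) * n0 = t / n0 * n0 + n0 := by ring
          omega)
    show tauC A (sigO A τ F) n0 o ((List.range (2 * n0 + t)).map α) = _
    have hlen : ((List.range (2 * n0 + t)).map α).length - 2 * n0 = t := by
      rw [List.length_map, List.length_range]
      omega
    simp only [tauC, hlen, e1, e2, e3]
    rw [dif_pos (hEx (t / n0))]
  -- c3 : block-wise identification of the real run with the abstract play
  have c3 : ∀ j, pairRun A (pInit A) ((List.range (j * n0)).map γ) = Aseq A τ F βs j := by
    intro j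
    induction j with
    | zero =>
        rw [Nat.zero_mul]
        rfl
    | succ j ih =>
        have hsplit : (List.range ((j + 1) * n0)).map γ =
            (List.range (j * n0)).map γ ++ (List.range n0).map (fun r => γ (j * n0 + r)) := by
          rw [Nat.succ_mul, List.range_add, List.map_append, List.map_map]
          rfl
        rw [hsplit, pairRun_append, ih]
        have hmid : (List.range n0).map (fun r => γ (j * n0 + r)) =
            (blkTrue α n0 j).zip (Y j) := by
          apply List.ext_getElem
          · rw [List.length_map, List.length_range, List.length_zip, blkTrue_length, yspec1]
            omega
          · intro r h1 h2
            have hr : r < n0 := by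
              rw [List.length_map, List.length_range] at h1
              exact h1
            rw [List.getElem_map, List.getElem_range, List.getElem_zip]
            have hdiv : (j * n0 + r) / n0 = j := by
              rw [Nat.add_comm, Nat.add_mul_div_right _ _ (by omega : 0 < n0),
                Nat.div_eq_of_lt hr]
              omega
            have hmod : (j * n0 + r) % n0 = r := by
              rw [Nat.add_comm, Nat.add_mul_mod_self_right, Nat.mod_eq_of_lt hr]
            refine Prod.ext ?_ ?_
            · show α (j * n0 + r) = (blkTrue α n0 j)[r]'(by rw [blkTrue_length]; exact hr)
              simp only [blkTrue]
              rw [List.getElem_map, List.getElem_range]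
            · show v (j * n0 + r) = (Y j)[r]'(by rw [yspec1]; exact hr)
              rw [c2 (j * n0 + r), hdiv, hmod, List.getD_eq_getElem]
        rw [hmid]
        exact yspec2 j
  have h1 : ∀ j, (Aseq A τ F βs j).2 = {q | ∃ m, m ≤ j * n0 ∧ A.run γ m = q} := by
    intro j
    rw [← c3 j, pairRun_range]
  have hU : (⋃ j, (Aseq A τ F βs j).2) = Set.range (A.run γ) := by
    calc (⋃ j, (Aseq A τ F βs j).2)
        = ⋃ j, {q | ∃ m, m ≤ j * n0 ∧ A.run γ m = q} := Set.iUnion_congr h1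
      _ = Set.range (A.run γ) := union_visited A γ _
          (fun n => ⟨n, Nat.le_mul_of_pos_right n (by omega)⟩)
  show Set.range (A.run γ) ∈ A.acc
  rw [← hU]
  exact hacc


lemma two_le_two_pow {k : ℕ} (hk : 1 ≤ k) : 2 ≤ 2 ^ k := by
  calc 2 = 2 ^ 1 := rfl
    _ ≤ 2 ^ k := Nat.pow_le_pow_right (by omega) hk

lemma bound_main (k : ℕ) (hk : 1 ≤ k) (m : ℕ) (hm : m ≤ 2 ^ 2 ^ (4 * k)) :
    2 * (m + 1) ≤ 2 ^ 2 ^ (5 * k) := by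
  have h1 : 1 ≤ 2 ^ 2 ^ (4 * k) := Nat.one_le_two_pow
  have h2 : 2 * (m + 1) ≤ 2 ^ (2 ^ (4 * k) + 2) := by
    rw [pow_add]
    have h4 : (2 : ℕ) ^ 2 = 4 := rfl
    rw [h4]
    omega
  refine le_trans h2 (Nat.pow_le_pow_right (by omega) ?_)
  have h3 : 2 ^ (5 * k) = 2 ^ (4 * k) * 2 ^ k := by
    rw [← pow_add]
    congr 1
    omega
  have h4 : 2 ≤ 2 ^ k := two_le_two_pow hk
  have h6 : 2 ^ (4 * k) * 2 ≤ 2 ^ (4 * k) * 2 ^ k := Nat.mul_le_mul_left _ h4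
  have h7 : 2 ≤ 2 ^ (4 * k) := two_le_two_pow (by omega)
  rw [h3]
  omega

lemma cardTT_le [Finite Q] :
    Nat.card ((Q × Set Q) → Set (Q × Set Q)) ≤ 2 ^ 2 ^ (4 * Nat.card Q) := by
  classical
  set k := Nat.card Q with hkdef
  have hSQ : Nat.card (Set Q) = 2 ^ k := by
    have h0 : Nat.card (Set Q) = Nat.card (Q → Prop) := rfl
    rw [h0, Nat.card_fun, Nat.card_eq_fintype_card (α := Prop), Fintype.card_prop]
  have hP : Nat.card (Q × Set Q) = k * 2 ^ k := by
    rw [Nat.card_prod, hSQ]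
  have hSP : Nat.card (Set (Q × Set Q)) = 2 ^ (k * 2 ^ k) := by
    have h0 : Nat.card (Set (Q × Set Q)) = Nat.card ((Q × Set Q) → Prop) := rfl
    rw [h0, Nat.card_fun, Nat.card_eq_fintype_card (α := Prop), Fintype.card_prop, hP]
  have hTT : Nat.card ((Q × Set Q) → Set (Q × Set Q)) = 2 ^ ((k * 2 ^ k) * (k * 2 ^ k)) := by
    rw [Nat.card_fun, hSP, hP, ← pow_mul]
  rw [hTT]
  apply Nat.pow_le_pow_right (by omega)
  have hkle : k ≤ 2 ^ k := le_of_lt (Nat.lt_two_pow_self (n := k))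
  have h1 : k * 2 ^ k ≤ 2 ^ (2 * k) := by
    calc k * 2 ^ k ≤ 2 ^ k * 2 ^ k := Nat.mul_le_mul_right _ hkle
      _ = 2 ^ (2 * k) := by rw [← pow_add]; congr 1; omega
  calc (k * 2 ^ k) * (k * 2 ^ k) ≤ 2 ^ (2 * k) * 2 ^ (2 * k) := Nat.mul_le_mul h1 h1
    _ = 2 ^ (4 * k) := by rw [← pow_add]; congr 1; omega


end

end UpperBoundAux

/-- doubly-exponential constant lookahead suffices for delay games with
deterministic weak Muller winning conditions. -/
theorem detWeakMuller_lookahead_upperBound :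
    ∃ c : ℕ, ∀ (k : ℕ) (σI σO Q : Type) (_ : Fintype σI) (_ : Fintype σO)
      (instQ : Fintype Q) (A : WDMA Q (σI × σO)),
      @Fintype.card Q instQ = k →
      ((∃ f : ℕ → ℕ, IsDelay f ∧ IsConstantDelay f ∧ f 0 ≤ 2 ^ 2 ^ (c * k) ∧
          OWins f A.language) ↔
        (∃ g : ℕ → ℕ, IsDelay g ∧ OWins g A.language)) := by
  refine ⟨5, ?_⟩
  intro k σI σO Q _ _ instQ A hk
  letI := instQ
  classical
  constructor
  · rintro ⟨f, hd, -, -, hw⟩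
    exact ⟨f, hd, hw⟩
  · rintro ⟨g, hg, hwin⟩
    obtain ⟨τ, hτ⟩ := (OWins_iff_stream A g).1 hwin
    set n0 : ℕ := Nat.card ((Q × Set Q) → Set (Q × Set Q)) + 1 with hn0def
    have hn0pos : 1 ≤ n0 := by omega
    haveI : Nonempty Q := ⟨A.init⟩
    have hkcard : Nat.card Q = k := by
      rw [Nat.card_eq_fintype_card]
      exact hk
    have hkpos : 1 ≤ k := by
      have h0 : 0 < Nat.card Q := Nat.card_pos
      omega
    refine ⟨fun i => if i = 0 then 2 * n0 else 1, ?_, ?_, ?_, ?_⟩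
    · intro i
      show 1 ≤ if i = 0 then 2 * n0 else 1
      by_cases h : i = 0 <;> simp [h]
      omega
    · intro i hi
      show (if i = 0 then 2 * n0 else 1) = 1
      rw [if_neg (by omega : ¬ i = 0)]
    · have h1 : Nat.card ((Q × Set Q) → Set (Q × Set Q)) ≤ 2 ^ 2 ^ (4 * k) := by
        have := cardTT_le (Q := Q)
        rw [hkcard] at this
        exact this
      have h2 := bound_main k hkpos _ h1
      simpa [hn0def] using h2
    · rw [OWins_iff_stream]
      refine ⟨tauC A (sigO A τ (FSum g)) n0 (τ []), fun α => ?_⟩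
      have hFsum : ∀ n, FSum (fun i => if i = 0 then 2 * n0 else 1) n = 2 * n0 + n := by
        intro n
        induction n with
        | zero => rw [FSum_zero]; simp
        | succ n ih =>
            rw [FSum_succ, ih]
            simp only [if_neg (Nat.succ_ne_zero n)]
            omega
      have key := transferA A τ (FSum g) (FSum_ge g hg) (FSum_mono g) hτ n0
        (fun w hw => beh_mem_Binf A w (by rw [hw, hn0def]; omega)) hn0pos (τ []) α
      simp only [hFsum]
      exact key

end DelayGames
end

section
/- For every deterministic weak Muller automaton 𝔄 with k states over an alphabet Σ there exists a deterministic parity automaton 𝔄' with at most k·2^k states and colors in {1,2} such that L(𝔄') = L(𝔄). -/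
universe u

namespace DelayGames

/-- every deterministic weak Muller automaton with `k` states has an
equivalent deterministic parity automaton with at most `k * 2 ^ k` states and
colors in `{1, 2}`. -/
theorem wDMA_to_DPA :
    ∀ (Q σ : Type) (instQ : Fintype Q) (A : WDMA Q σ),
      ∃ (Q' : Type) (instQ' : Fintype Q') (A' : DPA Q' σ),
        @Fintype.card Q' instQ' ≤ @Fintype.card Q instQ * 2 ^ @Fintype.card Q instQ ∧
        (∀ q : Q', A'.color q = 1 ∨ A'.color q = 2) ∧
        A'.language = A.language := by
  classical
  intro Q σ instQ A
  refine ⟨Q × Set Q, inferInstance, 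
    { init := (A.init, {A.init}),
      step := fun p a => (A.step p.1 a, insert (A.step p.1 a) p.2),
      color := fun p => if p.2 ∈ A.acc then 2 else 1 }, ?_, ?_, ?_⟩
  · rw [Fintype.card_prod, Fintype.card_set]
  · intro q
    by_cases h : q.2 ∈ A.acc <;> simp [h]
  · set A' : DPA (Q × Set Q) σ :=
      { init := (A.init, {A.init}),
        step := fun p a => (A.step p.1 a, insert (A.step p.1 a) p.2),
        color := fun p => if p.2 ∈ A.acc then 2 else 1 } with hA'
    ext α
    -- describe the run of A'
    have hrun : ∀ n, A'.run α n = (A.run α n, {q | ∃ m ≤ n, A.run α m = q}) := by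
      intro n
      induction n with
      | zero =>
        simp only [DPA.run, WDMA.run, hA']
        congr 1
        ext q
        simp [WDMA.run, eq_comm]
      | succ n ih =>
        simp only [DPA.run, WDMA.run, ih]
        simp only [hA']
        congr 1
        ext q
        simp only [Set.mem_insert_iff, Set.mem_setOf_eq]
        constructor
        · rintro (rfl | ⟨m, hm, rfl⟩)
          · exact ⟨n + 1, le_refl _, rfl⟩
          · exact ⟨m, le_trans hm (Nat.le_succ n), rfl⟩
        · rintro ⟨m, hm, rfl⟩
          rcases Nat.lt_or_ge m (n + 1) with h | h
          · exact Or.inr ⟨m, Nat.lt_succ_iff.mp h, rfl⟩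
          · have : m = n + 1 := le_antisymm hm h
            subst this; exact Or.inl rfl
    -- stabilization: a bound after which the visited set equals the range
    obtain ⟨N, hN⟩ : ∃ N, ∀ n, N ≤ n → {q | ∃ m ≤ n, A.run α m = q} = Set.range (A.run α) := by
      have g : ∀ q : Q, ∃ m : ℕ, q ∈ Set.range (A.run α) → A.run α m = q := by
        intro q
        by_cases h : q ∈ Set.range (A.run α)
        · obtain ⟨m, hm⟩ := h; exact ⟨m, fun _ => hm⟩
        · exact ⟨0, fun h' => absurd h' h⟩
      choose g hg using g
      refine ⟨Finset.univ.sup g, fun n hn => ?_⟩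
      ext q
      simp only [Set.mem_setOf_eq, Set.mem_range]
      constructor
      · rintro ⟨m, _, hm⟩; exact ⟨m, hm⟩
      · rintro ⟨m, hm⟩
        refine ⟨g q, le_trans (Finset.le_sup (Finset.mem_univ q)) hn, hg q ⟨m, hm⟩⟩
    -- every state occurring infinitely often has second component the range
    have hinf2 : ∀ p ∈ InfOcc (A'.run α), p.2 = Set.range (A.run α) := by
      intro p hp
      obtain ⟨n, hn, hpn⟩ := hp N
      rw [← hpn, hrun n]
      exact hN n hn
    -- InfOcc is nonempty
    have hne : ∃ p, p ∈ InfOcc (A'.run α) := by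
      by_contra h
      push_neg at h
      simp only [InfOcc, Set.mem_setOf_eq, not_forall, not_exists, not_and] at h
      choose f hf using h
      set M := Finset.univ.sup f with hM
      exact hf (A'.run α M) M (Finset.le_sup (Finset.mem_univ _)) rfl
    constructor
    · rintro ⟨p, hp, heven, _⟩
      have h2 := hinf2 p hp
      simp only [DPA.language, WDMA.language, Set.mem_setOf_eq]
      by_contra hacc
      have : A'.color p = 1 := by
        simp only [hA', h2]
        rw [if_neg hacc]
      rw [this] at heven
      exact (Nat.not_even_iff.mpr rfl) heven
    · intro hacc
      simp only [WDMA.language, Set.mem_setOf_eq] at hacc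
      obtain ⟨p, hp⟩ := hne
      have hcol : ∀ p' ∈ InfOcc (A'.run α), A'.color p' = 2 := by
        intro p' hp'
        have := hinf2 p' hp'
        simp only [hA', this]
        rw [if_pos hacc]
      exact ⟨p, hp, by rw [hcol p hp]; exact even_two,
        fun p' hp' => by rw [hcol p hp, hcol p' hp']⟩

end DelayGames
end

section
/- For every non-deterministic weak Muller automaton 𝔄 with k states over an alphabet Σ there exists a non-deterministic parity automaton 𝔄' with at most k·2^k states and colors in {1,2} such that L(𝔄') = L(𝔄). -/
universe u

namespace DelayGames

/-- every non-deterministic weak Muller automaton with `k` states has an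
equivalent non-deterministic parity automaton with at most `k * 2 ^ k` states and
colors in `{1, 2}`. -/
theorem wNMA_to_NPA :
    ∀ (Q σ : Type) (instQ : Fintype Q) (A : WNMA Q σ),
      ∃ (Q' : Type) (instQ' : Fintype Q') (A' : NPA Q' σ),
        @Fintype.card Q' instQ' ≤ @Fintype.card Q instQ * 2 ^ @Fintype.card Q instQ ∧
        (∀ q : Q', A'.color q = 1 ∨ A'.color q = 2) ∧
        A'.language = A.language := by
  intro Q σ instQ A
  classical
  refine ⟨Q × Finset Q, inferInstance,
    { init := (A.init, {A.init}),
      trans := {t | (t.1.1, t.2.1, t.2.2.1) ∈ A.trans ∧ t.2.2.2 = insert t.2.2.1 t.1.2},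
      color := fun p => if (↑p.2 : Set Q) ∈ A.acc then 2 else 1 }, ?_, ?_, ?_⟩
  · rw [Fintype.card_prod, Fintype.card_finset]
  · intro q
    by_cases h : (↑q.2 : Set Q) ∈ A.acc <;> simp [h]
  · ext α
    simp only [NPA.language, WNMA.language, Set.mem_setOf_eq]
    constructor
    · rintro ⟨ρ', h0, hstep, w, hwinf, heven, -⟩
      set ρ : ℕ → Q := fun n => (ρ' n).1 with hρ
      have hstep1 : ∀ n, (ρ n, α n, ρ (n + 1)) ∈ A.trans := fun n => (hstep n).1
      have hstep2 : ∀ n, (ρ' (n + 1)).2 = insert (ρ (n + 1)) ((ρ' n).2) :=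
        fun n => (hstep n).2
      have h01 : ρ 0 = A.init := by rw [hρ]; simp [h0]
      have h02 : (ρ' 0).2 = {A.init} := by rw [h0]
      -- every element of the tracked set is visited
      have hsub : ∀ n, ∀ x ∈ (ρ' n).2, ∃ k, ρ k = x := by
        intro n
        induction n with
        | zero =>
          intro x hx
          rw [h02, Finset.mem_singleton] at hx
          exact ⟨0, by rw [h01, hx]⟩
        | succ n ih =>
          intro x hx
          rw [hstep2 n, Finset.mem_insert] at hx
          rcases hx with hx | hx
          · exact ⟨n + 1, hx.symm⟩
          · exact ih x hx
      -- every visited state is eventually in the tracked set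
      have hmem : ∀ n k, k ≤ n → ρ k ∈ (ρ' n).2 := by
        intro n
        induction n with
        | zero =>
          intro k hk
          interval_cases k
          rw [h01, h02]
          exact Finset.mem_singleton_self _
        | succ n ih =>
          intro k hk
          rw [hstep2 n]
          rcases Nat.lt_succ_iff_lt_or_eq.mp (Nat.lt_succ_of_le hk) with h | h
          · exact Finset.mem_insert_of_mem (ih k (Nat.lt_succ_iff.mp h))
          · rw [h]; exact Finset.mem_insert_self _ _
      have hwacc : (↑w.2 : Set Q) ∈ A.acc := by
        by_contra hF
        simp only [if_neg hF] at heven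
        exact (Nat.not_even_iff.mpr rfl) heven
      refine ⟨ρ, h01, hstep1, ?_⟩
      have : Set.range ρ = (↑w.2 : Set Q) := by
        apply Set.eq_of_subset_of_subset
        · rintro x ⟨k, rfl⟩
          obtain ⟨n, hn, hw⟩ := hwinf k
          have := hmem n k hn
          rw [hw] at this
          exact this
        · intro x hx
          obtain ⟨n, -, hw⟩ := hwinf 0
          have : x ∈ (ρ' n).2 := by rw [hw]; exact hx
          obtain ⟨k, hk⟩ := hsub n x this
          exact ⟨k, hk⟩
      rw [this]; exact hwacc
    · rintro ⟨ρ, h0, hstep, hacc⟩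
      set R : ℕ → Finset Q := fun n => (Finset.range (n + 1)).image ρ with hR
      refine ⟨fun n => (ρ n, R n), ?_, ?_, ?_⟩
      · show (ρ 0, (Finset.range 1).image ρ) = (A.init, {A.init})
        rw [Finset.range_one, Finset.image_singleton, h0]
      · intro n
        refine ⟨hstep n, ?_⟩
        simp only [hR]
        rw [Finset.range_add_one, Finset.image_insert]
      · -- find N after which the tracked set equals the range
        have hex : ∀ q : Q, ∃ n, q ∈ Set.range ρ → ρ n = q := by
          intro q
          by_cases h : q ∈ Set.range ρ
          · obtain ⟨n, hn⟩ := h; exact ⟨n, fun _ => hn⟩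
          · exact ⟨0, fun h' => absurd h' h⟩
        choose g hg using hex
        set N := Finset.univ.sup g with hN
        have hstable : ∀ n, N ≤ n → (↑(R n) : Set Q) = Set.range ρ := by
          intro n hn
          apply Set.eq_of_subset_of_subset
          · intro x hx
            simp only [hR, Finset.coe_image, Set.mem_image] at hx
            obtain ⟨k, -, hk⟩ := hx
            exact ⟨k, hk⟩
          · rintro x hx
            have hgx : g x ≤ N := Finset.le_sup (Finset.mem_univ x)
            simp only [hR, Finset.coe_image, Set.mem_image]
            exact ⟨g x, by simp [Finset.mem_range]; omega, hg x hx⟩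
        -- a state visited infinitely often
        obtain ⟨q, hq⟩ := Finite.exists_infinite_fiber ρ
        have hqinf : (ρ ⁻¹' {q}).Infinite := Set.infinite_coe_iff.mp hq
        refine ⟨(q, R N), ?_, ?_, ?_⟩
        · intro M
          obtain ⟨n, hn, hnM⟩ := hqinf.exists_gt (max M N)
          have hn' : ρ n = q := hn
          have hNn : N ≤ n := le_of_lt (lt_of_le_of_lt (le_max_right M N) hnM)
          refine ⟨n, le_of_lt (lt_of_le_of_lt (le_max_left M N) hnM), ?_⟩
          have : R n = R N := Finset.coe_injective
            (by rw [hstable n hNn, hstable N le_rfl])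
          rw [Prod.mk.injEq]
          exact ⟨hn', this⟩
        · have : (↑(R N) : Set Q) ∈ A.acc := by rw [hstable N le_rfl]; exact hacc
          simp only [if_pos this]
          exact even_two
        · intro q' _
          by_cases h1 : (↑q'.2 : Set Q) ∈ A.acc <;>
            by_cases h2 : (↑(R N) : Set Q) ∈ A.acc <;>
            simp [h1, h2]
          rw [hstable N le_rfl] at h2
          exact absurd hacc h2

end DelayGames
end

section
/- For every n ≥ 1, every finite word w over Σ_n = {0,…,n−1} with |w| ≥ 2^n contains a bad j-pair for some j ∈ {0,…,n−1}. -/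
universe u

namespace DelayGames

lemma getD_drop' (w : List ℕ) (t q : ℕ) : (w.drop t).getD q 0 = w.getD (t+q) 0 := by
  simp [List.getD_eq_getElem?_getD, List.getElem?_drop]

lemma getD_take' (w : List ℕ) (m q : ℕ) (h : q < m) : (w.take m).getD q 0 = w.getD q 0 := by
  simp [List.getD_eq_getElem?_getD, List.getElem?_take, h]

lemma badPair_take {w : List ℕ} {m j : ℕ} (h : ListBadPair (w.take m) j) :
    ListBadPair w j := by
  obtain ⟨p, p', hpp, hlen, hp, hp', hq⟩ := h
  have hm : p' < m := lt_of_lt_of_le hlen (by simp)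
  refine ⟨p, p', hpp, lt_of_lt_of_le hlen (by simp), ?_, ?_, ?_⟩
  · rw [← getD_take' w m p (lt_trans hpp hm)]; exact hp
  · rw [← getD_take' w m p' hm]; exact hp'
  · intro q h1 h2
    rw [← getD_take' w m q (lt_trans h2 hm)]; exact hq q h1 h2

lemma badPair_drop {w : List ℕ} {t j : ℕ} (h : ListBadPair (w.drop t) j) :
    ListBadPair w j := by
  obtain ⟨p, p', hpp, hlen, hp, hp', hq⟩ := h
  rw [List.length_drop] at hlen
  refine ⟨t + p, t + p', by omega, by omega, ?_, ?_, ?_⟩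
  · rw [← getD_drop']; exact hp
  · rw [← getD_drop']; exact hp'
  · intro q h1 h2
    have : q = t + (q - t) := by omega
    rw [this, ← getD_drop']
    exact hq (q - t) (by omega) (by omega)

/-- every word over `{0, …, n-1}` of length at least `2 ^ n` contains a
bad `j`-pair for some `j < n`. -/
theorem badPair_exists_of_long :
    ∀ n : ℕ, 1 ≤ n → ∀ w : List ℕ, (∀ a ∈ w, a < n) →
      2 ^ n ≤ w.length → ∃ j < n, ListBadPair w j := by
  intro n
  induction n with
  | zero => omega
  | succ n ih =>
    intro _ w hw hlen
    have hwlt : ∀ i (h : i < w.length), w.getD i 0 < n + 1 := by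
      intro i h
      rw [List.getD_eq_getElem w 0 h]
      exact hw _ (List.getElem_mem h)
    rcases Nat.eq_zero_or_pos n with rfl | hn
    · -- base case n = 1
      have h2 : 2 ≤ w.length := by simpa using hlen
      refine ⟨0, by omega, 0, 1, by omega, by omega, ?_, ?_, by omega⟩
      · have := hwlt 0 (by omega); omega
      · have := hwlt 1 (by omega); omega
    · -- inductive step
      by_cases h2 : ∃ p p', p < p' ∧ p' < w.length ∧ w.getD p 0 = n ∧ w.getD p' 0 = n
      · -- letter n occurs twice: take closest pair
        obtain ⟨p, p', hpp, hplen, hp, hp'⟩ := h2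
        have hQ : ∃ q, p < q ∧ q < w.length ∧ w.getD q 0 = n := ⟨p', hpp, hplen, hp'⟩
        classical
        obtain ⟨hm1, hm2, hm3⟩ := Nat.find_spec hQ
        have hmin : ∀ q, q < Nat.find hQ → ¬(p < q ∧ q < w.length ∧ w.getD q 0 = n) :=
          fun q hq => Nat.find_min hQ hq
        refine ⟨n, by omega, p, Nat.find hQ, hm1, hm2, hp, hm3, ?_⟩
        intro q hq1 hq2
        have hql : q < w.length := by omega
        have := hwlt q hql
        have hne : w.getD q 0 ≠ n := by
          intro hc
          exact hmin q hq2 ⟨hq1, hql, hc⟩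
        omega
      · -- letter n occurs at most once
        push_neg at h2
        have hpow : 2 ^ (n + 1) = 2 ^ n + 2 ^ n := by ring
        by_cases h3 : ∃ t, t < w.length ∧ w.getD t 0 = n
        · obtain ⟨t, htl, htv⟩ := h3
          have huniq : ∀ i, i < w.length → i ≠ t → w.getD i 0 ≠ n := by
            intro i hi hne hc
            rcases Nat.lt_or_ge i t with h | h
            · exact absurd htv (h2 i t h htl hc)
            · exact absurd (h2 t i (by omega) hi htv) (fun hh => hh hc)
          by_cases h4 : 2 ^ n ≤ t
          · -- use the prefix before t
            obtain ⟨j, hj, hbp⟩ := ih hn (w.take t)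
              (by
                intro a ha
                obtain ⟨i, hi, rfl⟩ := List.mem_iff_getElem.mp ha
                simp only [List.length_take, lt_min_iff] at hi
                have hit : i < t := hi.1
                have hiw : i < w.length := hi.2
                have h5 : (w.take t)[i] = w.getD i 0 := by
                  rw [List.getElem_take, List.getD_eq_getElem w 0 hiw]
                rw [h5]
                have := hwlt i hiw
                have := huniq i hiw (by omega)
                omega)
              (by
                rw [List.length_take]
                omega)
            exact ⟨j, by omega, badPair_take hbp⟩
          · -- use the suffix after t
            obtain ⟨j, hj, hbp⟩ := ih hn (w.drop (t + 1))
              (by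
                intro a ha
                obtain ⟨i, hi, rfl⟩ := List.mem_iff_getElem.mp ha
                have hiw : t + 1 + i < w.length := by
                  rw [List.length_drop] at hi; omega
                have h5 : (w.drop (t + 1))[i] = w.getD (t + 1 + i) 0 := by
                  rw [List.getElem_drop, List.getD_eq_getElem w 0 hiw]
                rw [h5]
                have := hwlt _ hiw
                have := huniq (t + 1 + i) hiw (by omega)
                omega)
              (by
                rw [List.length_drop]
                omega)
            exact ⟨j, by omega, badPair_drop hbp⟩
        · -- letter n does not occur: apply ih to w
          push_neg at h3
          obtain ⟨j, hj, hbp⟩ := ih hn w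
            (by
              intro a ha
              obtain ⟨i, hi, rfl⟩ := List.mem_iff_getElem.mp ha
              have h5 := hwlt i hi
              have h6 := h3 i hi
              rw [List.getD_eq_getElem w 0 hi] at h5 h6
              omega)
            (by omega)
          exact ⟨j, by omega, hbp⟩

end DelayGames
end

section
/- For every n ≥ 1, there exists a finite word w over Σ_n = {0,…,n−1} with |w| = 2^n − 1 that contains no bad j-pair for any j ∈ {0,…,n−1}. -/
universe u

namespace DelayGames

/-- there is a word over `{0, …, n-1}` of length `2 ^ n - 1` without any
bad `j`-pair. -/
theorem badPair_free_word_exists :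
    ∀ n : ℕ, 1 ≤ n → ∃ w : List ℕ, (∀ a ∈ w, a < n) ∧
      w.length = 2 ^ n - 1 ∧ ∀ j < n, ¬ ListBadPair w j := by
  intro n hn
  induction n, hn using Nat.le_induction with
  | base =>
    refine ⟨[0], ?_, rfl, ?_⟩
    · simp
    · intro j hj
      interval_cases j
      rintro ⟨p, p', hpp, hlen, _⟩
      simp at hlen; omega
  | succ n hn ih =>
    obtain ⟨u, hlt, hlen, hbad⟩ := ih
    set L := u.length with hL
    have hLpos : 1 ≤ L := by
      have : 1 ≤ 2 ^ n := Nat.one_le_two_pow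
      have h2 : 2 ≤ 2 ^ n := by
        calc 2 = 2 ^ 1 := rfl
        _ ≤ 2 ^ n := Nat.pow_le_pow_right (by norm_num) hn
      omega
    refine ⟨u ++ n :: u, ?_, ?_, ?_⟩
    · intro a ha
      simp at ha
      rcases ha with h | h | h
      · exact lt_trans (hlt a h) (Nat.lt_succ_self n)
      · omega
      · exact lt_trans (hlt a h) (Nat.lt_succ_self n)
    · have : 1 ≤ 2 ^ n := Nat.one_le_two_pow
      simp [hlen, pow_succ]; omega
    · intro j hj
      set w := u ++ n :: u with hw
      have hwlen : w.length = 2 * L + 1 := by simp [hw]; omega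
      -- value lemmas
      have hval_lt : ∀ q, q < L → w.getD q 0 = u.getD q 0 := fun q hq =>
        List.getD_append u (n :: u) 0 q hq
      have hval_mid : w.getD L 0 = n := by
        rw [List.getD_append_right u (n :: u) 0 L le_rfl]
        simp [hL]
      have hval_gt : ∀ q, L < q → w.getD q 0 = u.getD (q - L - 1) 0 := by
        intro q hq
        rw [List.getD_append_right u (n :: u) 0 q (le_of_lt hq)]
        have : q - L = (q - L - 1) + 1 := by omega
        rw [this]
        simp
      have hu_lt : ∀ q, q < L → u.getD q 0 < n := by
        intro q hq
        rw [List.getD_eq_getElem u 0 hq]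
        exact hlt _ (List.getElem_mem hq)
      rintro ⟨p, p', hpp, hp'len, hp, hp', hbet⟩
      rw [hwlen] at hp'len
      rcases eq_or_lt_of_le (Nat.le_of_lt_succ hj) with hjn | hjn
      · -- j = n : only position L has value n
        have hpL : p = L := by
          by_contra h
          rcases Nat.lt_or_ge p L with h1 | h1
          · have := hu_lt p h1; rw [← hval_lt p h1, hp, hjn] at this; omega
          · have h2 : L < p := by omega
            have h3 : p - L - 1 < L := by omega
            have := hu_lt _ h3; rw [← hval_gt p h2, hp, hjn] at this; omega
        have hp'L : p' = L := by
          by_contra h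
          rcases Nat.lt_or_ge p' L with h1 | h1
          · have := hu_lt p' h1; rw [← hval_lt p' h1, hp', hjn] at this; omega
          · have h2 : L < p' := by omega
            have h3 : p' - L - 1 < L := by omega
            have := hu_lt _ h3; rw [← hval_gt p' h2, hp', hjn] at this; omega
        omega
      · -- j < n
        have hjn' : j < n := hjn
        have hpne : p ≠ L := by
          intro h; rw [h, hval_mid] at hp; omega
        have hp'ne : p' ≠ L := by
          intro h; rw [h, hval_mid] at hp'; omega
        rcases Nat.lt_or_ge p' L with h1 | h1
        · -- both in left copy
          refine hbad j hjn' ⟨p, p', hpp, ?_, ?_, ?_, ?_⟩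
          · omega
          · rw [← hval_lt p (by omega)]; exact hp
          · rw [← hval_lt p' h1]; exact hp'
          · intro q hq1 hq2
            rw [← hval_lt q (by omega)]; exact hbet q hq1 hq2
        · have hp'gt : L < p' := by omega
          rcases Nat.lt_or_ge p L with h2 | h2
          · -- crossing: q = L between
            have := hbet L h2 hp'gt
            rw [hval_mid] at this; omega
          · have hpgt : L < p := by omega
            refine hbad j hjn' ⟨p - L - 1, p' - L - 1, by omega, by omega, ?_, ?_, ?_⟩
            · rw [← hval_gt p hpgt]; exact hp
            · rw [← hval_gt p' hp'gt]; exact hp'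
            · intro q hq1 hq2
              have hq : w.getD (q + L + 1) 0 < j := hbet (q + L + 1) (by omega) (by omega)
              rw [hval_gt (q + L + 1) (by omega)] at hq
              have : q + L + 1 - L - 1 = q := by omega
              rwa [this] at hq


end DelayGames
end

section
/- For every n ≥ 1, the deterministic weak Muller automaton 𝔓_n recognizes exactly P_n, i.e., L(𝔓_n) = P_n, where 𝔓_n is the complete deterministic automaton over the alphabet Σ_n × Σ_n with state set {q_I, q_f} ∪ {s_j, t_j : j ∈ Σ_n}, initial state q_I, transitions: from q_I on any letter (a, b) go to s_b; from s_j on (a, b) go to t_j if a = j and stay in s_j if a ≠ j; from t_j on (a, b) stay in t_j if a < j, go to s_j if a > j, and go to q_f if a = j; from q_f every letter loops on q_f; and with weak Muller family 𝓕 = {F_0,…,F_{n−1}} where F_j = {q_I, q_f, s_j, t_j}; and where P_n ⊆ (Σ_n × Σ_n)^ω contains a word (α, β) if and only if the suffix α(1)α(2)⋯ contains a bad β(0)-pair. -/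
universe u

namespace DelayGames

/-- The states of the automaton `𝔓_n`. -/
inductive PState (n : ℕ) : Type where
  | qI : PState n
  | qf : PState n
  | s : Fin n → PState n
  | t : Fin n → PState n

/-- The transition function of `𝔓_n`. -/
def pStep (n : ℕ) : PState n → (Fin n × Fin n) → PState n
  | .qI, (_, b) => .s b
  | .s j, (a, _) => if a = j then .t j else .s j
  | .t j, (a, _) =>
      if (a : ℕ) < (j : ℕ) then .t j else if a = j then .qf else .s j
  | .qf, _ => .qf

/-- The deterministic weak Muller automaton `𝔓_n` with family
`𝓕 = {F_j : j ∈ Σ_n}`, `F_j = {q_I, q_f, s_j, t_j}`. -/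
def PAut (n : ℕ) : WDMA (PState n) (Fin n × Fin n) where
  init := .qI
  step := pStep n
  acc := {F | ∃ j : Fin n,
    F = ({PState.qI, PState.qf, PState.s j, PState.t j} : Set (PState n))}

namespace PAutProof

variable {n : ℕ}

lemma pStep_qI (x : Fin n × Fin n) : pStep n .qI x = .s x.2 := by cases x; rfl
lemma pStep_qf (x : Fin n × Fin n) : pStep n .qf x = .qf := by cases x; rfl
lemma pStep_s (j : Fin n) (x : Fin n × Fin n) :
    pStep n (.s j) x = if x.1 = j then .t j else .s j := by cases x; rfl
lemma pStep_t (j : Fin n) (x : Fin n × Fin n) :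
    pStep n (.t j) x = if (x.1 : ℕ) < (j : ℕ) then .t j
      else if x.1 = j then .qf else .s j := by cases x; rfl

variable (w : ℕ → Fin n × Fin n)

lemma run_zero : (PAut n).run w 0 = .qI := rfl
lemma run_succ (k : ℕ) :
    (PAut n).run w (k + 1) = pStep n ((PAut n).run w k) (w k) := rfl
lemma run_one : (PAut n).run w 1 = .s (w 0).2 := by
  rw [run_succ, run_zero, pStep_qI]

lemma inv : ∀ k, (PAut n).run w (k + 1) = .s (w 0).2 ∨
    (PAut n).run w (k + 1) = .t (w 0).2 ∨ (PAut n).run w (k + 1) = .qf := by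
  intro k
  induction k with
  | zero => left; exact run_one w
  | succ k ih =>
    rw [run_succ]
    rcases ih with h | h | h <;> rw [h]
    · rw [pStep_s]; split_ifs
      · right; left; rfl
      · left; rfl
    · rw [pStep_t]; split_ifs
      · right; left; rfl
      · right; right; rfl
      · left; rfl
    · rw [pStep_qf]; right; right; rfl

lemma t_bad : ∀ i, (PAut n).run w (i + 2) = .t (w 0).2 →
    ∃ p, p ≤ i ∧ ((w (p + 1)).1 : ℕ) = ((w 0).2 : ℕ) ∧
      ∀ q, p < q → q ≤ i → ((w (q + 1)).1 : ℕ) < ((w 0).2 : ℕ) := by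
  intro i
  induction i with
  | zero =>
    intro h
    rw [show (0 + 2) = 1 + 1 from rfl, run_succ, run_one, pStep_s] at h
    split_ifs at h with hc
    exact ⟨0, le_refl 0, by rw [hc], fun q hq hq' => by omega⟩
  | succ i ih =>
    intro h
    rw [show (i + 1 + 2) = (i + 2) + 1 from rfl, run_succ] at h
    rcases inv w (i + 1) with hs | ht | hf
    · rw [hs, pStep_s] at h
      split_ifs at h with hc
      exact ⟨i + 1, le_refl _, by rw [hc], fun q hq hq' => by omega⟩
    · rw [ht, pStep_t] at h
      split_ifs at h with h1 h2
      obtain ⟨p, hp, hpj, hpq⟩ := ih ht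
      refine ⟨p, by omega, hpj, fun q hq hq' => ?_⟩
      rcases Nat.lt_or_ge q (i + 1) with hlt | hge
      · exact hpq q hq (by omega)
      · have : q = i + 1 := by omega
        subst this; exact h1
    · rw [hf, pStep_qf] at h; simp at h

lemma qf_bad : ∀ m, (PAut n).run w (m + 2) = .qf →
    InfBadPair (fun k => ((w (k + 1)).1 : ℕ)) ((w 0).2 : ℕ) := by
  intro m
  induction m with
  | zero =>
    intro h
    rw [show (0 + 2) = 1 + 1 from rfl, run_succ, run_one, pStep_s] at h
    split_ifs at h
  | succ m ih =>
    intro h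
    rw [show (m + 1 + 2) = (m + 2) + 1 from rfl, run_succ] at h
    rcases inv w (m + 1) with hs | ht | hf
    · rw [hs, pStep_s] at h; split_ifs at h
    · rw [ht, pStep_t] at h
      split_ifs at h with h1 h2
      obtain ⟨p, hp, hpj, hpq⟩ := t_bad w m ht
      refine ⟨p, m + 1, by omega, hpj, ?_, ?_⟩
      · show ((w (m + 1 + 1)).1 : ℕ) = ((w 0).2 : ℕ)
        rw [h2]
      · intro q hq hq'
        exact hpq q hq (by omega)
    · rw [hf, pStep_qf] at h; exact ih hf

lemma stay_t (p : ℕ) (hpt : (PAut n).run w (p + 2) = .t (w 0).2) :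
    ∀ d, (∀ q, p < q → q ≤ p + d → ((w (q + 1)).1 : ℕ) < ((w 0).2 : ℕ)) →
      (PAut n).run w (p + 2 + d) = .t (w 0).2 := by
  intro d
  induction d with
  | zero => intro _; exact hpt
  | succ d ih =>
    intro hlt
    have h1 := ih (fun q hq hq' => hlt q hq (by omega))
    have h2 : ((w (p + 2 + d)).1 : ℕ) < ((w 0).2 : ℕ) := by
      have := hlt (p + d + 1) (by omega) (by omega)
      rwa [show p + d + 1 + 1 = p + 2 + d from by omega] at this
    rw [show p + 2 + (d + 1) = (p + 2 + d) + 1 from rfl, run_succ, h1, pStep_t,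
      if_pos h2]

lemma bad_qf (h : InfBadPair (fun k => ((w (k + 1)).1 : ℕ)) ((w 0).2 : ℕ)) :
    ∃ m, (PAut n).run w m = .qf := by
  obtain ⟨p, p', hpp, hpj, hp'j, hbet⟩ := h
  have hpjf : (w (p + 1)).1 = (w 0).2 := Fin.ext hpj
  have hp'jf : (w (p' + 1)).1 = (w 0).2 := Fin.ext hp'j
  rcases inv w p with hs | ht | hf
  · -- run (p+1) = s j, so run (p+2) = t j
    have ht2 : (PAut n).run w (p + 2) = .t (w 0).2 := by
      rw [show p + 2 = (p + 1) + 1 from rfl, run_succ, hs, pStep_s, if_pos hpjf]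
    have h1 := stay_t w p ht2 (p' - 1 - p)
      (fun q hq hq' => hbet q hq (by omega))
    rw [show p + 2 + (p' - 1 - p) = p' + 1 from by omega] at h1
    refine ⟨p' + 2, ?_⟩
    rw [show p' + 2 = (p' + 1) + 1 from rfl, run_succ, h1, pStep_t,
      if_neg (by omega), if_pos hp'jf]
  · refine ⟨p + 2, ?_⟩
    rw [show p + 2 = (p + 1) + 1 from rfl, run_succ, ht, pStep_t,
      if_neg (by omega), if_pos hpjf]
  · exact ⟨p + 1, hf⟩

lemma qf_t : ∀ m, (PAut n).run w m = .qf →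
    ∃ m', (PAut n).run w m' = .t (w 0).2 := by
  intro m
  induction m using Nat.strong_induction_on with
  | _ m ih =>
    match m with
    | 0 => intro h; rw [run_zero] at h; simp at h
    | 1 => intro h; rw [run_one] at h; simp at h
    | (m + 2) =>
      intro h
      rw [show m + 2 = (m + 1) + 1 from rfl, run_succ] at h
      rcases inv w m with hs | ht | hf
      · rw [hs, pStep_s] at h; split_ifs at h
      · exact ⟨m + 1, ht⟩
      · exact ih (m + 1) (by omega) hf

end PAutProof

open PAutProof in
/-- the automaton `𝔓_n` recognizes exactly `P n`. -/
theorem PAut_language :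
    ∀ n : ℕ, 1 ≤ n → (PAut n).language = P n := by
  intro n _
  ext w
  constructor
  · intro hw
    obtain ⟨j', hj'⟩ : ∃ j' : Fin n, Set.range ((PAut n).run w) =
        ({PState.qI, PState.qf, PState.s j', PState.t j'} : Set (PState n)) := hw
    have hqf : PState.qf ∈ Set.range ((PAut n).run w) := by
      rw [hj']; simp
    obtain ⟨m, hm⟩ := hqf
    match m, hm with
    | 0, hm => rw [run_zero] at hm; simp at hm
    | 1, hm => rw [run_one] at hm; simp at hm
    | (m + 2), hm => exact qf_bad w m hm
  · intro hw
    obtain ⟨mf, hmf⟩ := bad_qf w hw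
    obtain ⟨mt, hmt⟩ := qf_t w mf hmf
    show Set.range ((PAut n).run w) ∈ (PAut n).acc
    refine ⟨(w 0).2, ?_⟩
    ext x
    simp only [Set.mem_range, Set.mem_insert_iff, Set.mem_singleton_iff]
    constructor
    · rintro ⟨m, rfl⟩
      match m with
      | 0 => left; exact run_zero w
      | (k + 1) =>
        rcases inv w k with h | h | h
        · right; right; left; exact h
        · right; right; right; exact h
        · right; left; exact h
    · rintro (rfl | rfl | rfl | rfl)
      · exact ⟨0, run_zero w⟩
      · exact ⟨mf, hmf⟩
      · exact ⟨1, run_one w⟩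
      · exact ⟨mt, hmt⟩

end DelayGames
end
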